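/- For ν ∈ ℂ with Im ν > 0, let K_ν(x) = e^{iν|x|}/(4π|x|) for x ∈ ℝ³ \ {0}. Then: (a) there is an absolute constant C with ‖K_ν‖_{L²({|x|<1})} ≤ C; and (b) for every p ∈ [1,∞] with p ≠ 3 there is a constant C_p, independent of ν, such that ‖K_ν‖_{L^p({|x|≥1})} ≤ C_p (1 + (Im ν)^{1−3/p}). -/

import Mathlib

open MeasureTheory Metric Set Real
open scoped ENNReal

/-- The Helmholtz resolvent kernel `K_ν(x) = e^{iν|x|}/(4π|x|)` on `ℝ³`. -/
noncomputable def Kres (ν : ℂ) (x : EuclideanSpace ℝ (Fin 3)) : ℂ :=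
  Complex.exp (Complex.I * ν * (‖x‖ : ℂ)) / (4 * (Real.pi : ℂ) * (‖x‖ : ℂ))
lemma finrank_E3 : Module.finrank ℝ (EuclideanSpace ℝ (Fin 3)) = 3 := by
  simp [finrank_euclideanSpace_fin]

lemma norm_Kres (ν : ℂ) (x : EuclideanSpace ℝ (Fin 3)) :
    ‖Kres ν x‖ = Real.exp (-(ν.im * ‖x‖)) / (4 * Real.pi * ‖x‖) := by
  unfold Kres
  rw [norm_div]
  congr 1
  · rw [Complex.norm_exp]
    congr 1
    simp [Complex.mul_re, Complex.mul_im]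
  · have h : (4 * (Real.pi : ℂ) * ((‖x‖ : ℝ) : ℂ)) = (((4 * Real.pi * ‖x‖ : ℝ)) : ℂ) := by
      push_cast; ring
    rw [h, Complex.norm_real, Real.norm_eq_abs, abs_of_nonneg (by positivity)]

lemma exp_neg_le (r : ℝ) (hr : 0 ≤ r) : Real.exp (-r) ≤ 3125 * (1 + r) ^ (-(5:ℝ)) := by
  have h1 : ((1 + r) / 5) ^ (5:ℕ) ≤ Real.exp r := by
    have h2 : (1 + r) / 5 ≤ 1 + r / 5 := by linarith
    have h3 : (0:ℝ) ≤ (1 + r) / 5 := by linarith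
    calc ((1 + r) / 5) ^ (5:ℕ) ≤ (1 + r / 5) ^ (5:ℕ) := by
          exact pow_le_pow_left₀ h3 h2 5
      _ ≤ (Real.exp (r / 5)) ^ (5:ℕ) := by
          have := Real.add_one_le_exp (r / 5)
          exact pow_le_pow_left₀ (by linarith) (by linarith) 5
      _ = Real.exp r := by
          rw [← Real.exp_nat_mul]; ring_nf
  have hpos : (0:ℝ) < ((1 + r) / 5) ^ (5:ℕ) := by positivity
  have h4 : Real.exp (-r) ≤ (((1 + r) / 5) ^ (5:ℕ))⁻¹ := by
    rw [Real.exp_neg]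
    exact inv_anti₀ hpos h1
  calc Real.exp (-r) ≤ (((1 + r) / 5) ^ (5:ℕ))⁻¹ := h4
    _ = 3125 * (1 + r) ^ (-(5:ℝ)) := by
        rw [Real.rpow_neg (by linarith), show ((5:ℝ)) = ((5:ℕ):ℝ) by norm_num,
          Real.rpow_natCast]
        rw [div_pow]
        rw [inv_div]
        norm_num
        ring
lemma lintegral_ball_rpow {s : ℝ} (hs0 : 0 < s) (hs3 : s < 3) :
    ∫⁻ x in ball (0 : EuclideanSpace ℝ (Fin 3)) 1, ENNReal.ofReal (‖x‖ ^ (-s)) < ∞ := by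
  have hmeas : AEMeasurable (fun x : EuclideanSpace ℝ (Fin 3) => ‖x‖ ^ (-s))
      (volume.restrict (ball (0 : EuclideanSpace ℝ (Fin 3)) 1)) := by fun_prop
  rw [lintegral_eq_lintegral_meas_le _ (Filter.Eventually.of_forall fun x => by positivity) hmeas]
  set m := fun t : ℝ =>
    (volume.restrict (ball (0 : EuclideanSpace ℝ (Fin 3)) 1))
      {a : EuclideanSpace ℝ (Fin 3) | t ≤ ‖a‖ ^ (-s)} with hm
  have hball : volume (ball (0 : EuclideanSpace ℝ (Fin 3)) 1) < ∞ := measure_ball_lt_top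
  calc ∫⁻ t in Ioi (0:ℝ), m t
      ≤ ∫⁻ t in Ioc (0:ℝ) 1 ∪ Ioi 1, m t := lintegral_mono_set Ioi_subset_Ioc_union_Ioi
    _ ≤ (∫⁻ t in Ioc (0:ℝ) 1, m t) + ∫⁻ t in Ioi (1:ℝ), m t := lintegral_union_le _ _ _
    _ < ∞ := by
        refine ENNReal.add_lt_top.2 ⟨?_, ?_⟩
        · calc (∫⁻ t in Ioc (0:ℝ) 1, m t)
              ≤ ∫⁻ _ in Ioc (0:ℝ) 1, volume (ball (0 : EuclideanSpace ℝ (Fin 3)) 1) := by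
                refine lintegral_mono fun t => ?_
                calc m t ≤ (volume.restrict (ball (0 : EuclideanSpace ℝ (Fin 3)) 1)) univ :=
                      measure_mono (subset_univ _)
                  _ = volume (ball (0 : EuclideanSpace ℝ (Fin 3)) 1) := by
                      rw [Measure.restrict_apply_univ]
            _ = volume (ball (0 : EuclideanSpace ℝ (Fin 3)) 1) * volume (Ioc (0:ℝ) 1) := by
                rw [setLIntegral_const]
            _ < ∞ := ENNReal.mul_lt_top hball (by simp)
        · have hsub : ∀ t : ℝ, 1 < t → m t ≤
              ENNReal.ofReal (t ^ (-(3/s))) * volume (ball (0 : EuclideanSpace ℝ (Fin 3)) 1) := by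
            intro t ht
            have ht0 : (0:ℝ) < t := lt_trans one_pos ht
            have hset : {a : EuclideanSpace ℝ (Fin 3) | t ≤ ‖a‖ ^ (-s)} ⊆
                closedBall 0 (t ^ (-s)⁻¹) := by
              intro a ha
              simp only [mem_setOf_eq] at ha
              have ha0 : a ≠ 0 := by
                intro h0
                rw [h0] at ha
                simp only [norm_zero] at ha
                rw [Real.zero_rpow (by intro h; simp at h; linarith)] at ha
                linarith
              have hna : 0 < ‖a‖ := norm_pos_iff.2 ha0
              rw [mem_closedBall_zero_iff]
              exact (Real.le_rpow_inv_iff_of_neg hna ht0 (by linarith)).2 ha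
            have hr0 : (0:ℝ) ≤ t ^ (-s)⁻¹ := Real.rpow_nonneg ht0.le _
            calc m t ≤ volume (closedBall (0 : EuclideanSpace ℝ (Fin 3)) (t ^ (-s)⁻¹)) := by
                  refine le_trans (measure_mono hset) ?_
                  exact Measure.restrict_le_self _
              _ = ENNReal.ofReal ((t ^ (-s)⁻¹) ^ Module.finrank ℝ (EuclideanSpace ℝ (Fin 3))) *
                    volume (ball (0 : EuclideanSpace ℝ (Fin 3)) 1) :=
                  Measure.addHaar_closedBall _ _ hr0
              _ = ENNReal.ofReal (t ^ (-(3/s))) * volume (ball (0 : EuclideanSpace ℝ (Fin 3)) 1) := by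
                  rw [finrank_E3]
                  congr 2
                  rw [← Real.rpow_natCast (t ^ (-s)⁻¹) 3, ← Real.rpow_mul ht0.le]
                  congr 1
                  push_cast
                  rw [inv_neg, neg_mul, ← div_eq_inv_mul, neg_div', neg_div]
          calc (∫⁻ t in Ioi (1:ℝ), m t)
              ≤ ∫⁻ t in Ioi (1:ℝ), ENNReal.ofReal (t ^ (-(3/s))) *
                  volume (ball (0 : EuclideanSpace ℝ (Fin 3)) 1) :=
                setLIntegral_mono' measurableSet_Ioi fun t ht => hsub t ht
            _ = (∫⁻ t in Ioi (1:ℝ), ENNReal.ofReal (t ^ (-(3/s)))) *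
                  volume (ball (0 : EuclideanSpace ℝ (Fin 3)) 1) :=
                lintegral_mul_const' _ _ hball.ne
            _ < ∞ := by
                refine ENNReal.mul_lt_top ?_ hball
                refine IntegrableOn.setLIntegral_lt_top ?_
                refine integrableOn_Ioi_rpow_of_lt ?_ one_pos
                rw [neg_lt_neg_iff]
                rw [lt_div_iff₀ hs0]
                linarith

noncomputable def Fprof (q : ℝ) (x : EuclideanSpace ℝ (Fin 3)) : ℝ :=
  (Real.exp (-‖x‖) / (4 * Real.pi * ‖x‖)) ^ q
lemma Fprof_measurable (q : ℝ) :
    Measurable (fun x : EuclideanSpace ℝ (Fin 3) => ENNReal.ofReal (Fprof q x)) := by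
  unfold Fprof
  fun_prop

lemma lintegral_scaling {t : ℝ} (ht : 0 < t) (G : EuclideanSpace ℝ (Fin 3) → ℝ≥0∞)
    (hG : Measurable G) :
    ∫⁻ x : EuclideanSpace ℝ (Fin 3), G (t • x) =
      ENNReal.ofReal ((t ^ (3:ℕ))⁻¹) * ∫⁻ x, G x := by
  have h1 : ∫⁻ x : EuclideanSpace ℝ (Fin 3), G (t • x) ∂volume
      = ∫⁻ y, G y ∂(Measure.map (t • ·) volume) :=
    (lintegral_map hG (measurable_const_smul t)).symm
  rw [h1, Measure.map_addHaar_smul volume ht.ne', lintegral_smul_measure, finrank_E3,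
    abs_of_nonneg (by positivity), smul_eq_mul]
/-- The scaling profile. -/
lemma Fprof_nonneg (q : ℝ) (x : EuclideanSpace ℝ (Fin 3)) : 0 ≤ Fprof q x := by
  unfold Fprof; positivity

lemma I_lt_top {q : ℝ} (hq1 : 1 ≤ q) (hq3 : q < 3) :
    ∫⁻ x : EuclideanSpace ℝ (Fin 3), ENNReal.ofReal (Fprof q x) < ∞ := by
  have hq0 : (0:ℝ) < q := by linarith
  rw [← lintegral_add_compl (fun x => ENNReal.ofReal (Fprof q x))
    (measurableSet_ball (x := (0 : EuclideanSpace ℝ (Fin 3))) (ε := 1))]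
  refine ENNReal.add_lt_top.2 ⟨?_, ?_⟩
  · -- ball part : Fprof q x ≤ ‖x‖ ^ (-q)
    refine lt_of_le_of_lt (setLIntegral_mono' measurableSet_ball
      (fun x _ => ?_)) (lintegral_ball_rpow hq0 hq3)
    refine ENNReal.ofReal_le_ofReal ?_
    unfold Fprof
    rcases eq_or_ne ‖x‖ 0 with h0 | h0
    · rw [h0]
      simp [Real.zero_rpow hq0.ne', Real.zero_rpow (neg_ne_zero.2 hq0.ne')]
    · have hx : 0 < ‖x‖ := lt_of_le_of_ne (norm_nonneg x) (Ne.symm h0)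
      have hb : Real.exp (-‖x‖) / (4 * Real.pi * ‖x‖) ≤ ‖x‖⁻¹ := by
        have h1 : Real.exp (-‖x‖) / (4 * Real.pi * ‖x‖) ≤ 1 / (4 * Real.pi * ‖x‖) := by
          gcongr
          exact Real.exp_le_one_iff.2 (neg_nonpos.2 (norm_nonneg x))
        have h2 : 1 / (4 * Real.pi * ‖x‖) ≤ ‖x‖⁻¹ := by
          rw [← one_div]
          exact one_div_le_one_div_of_le hx (by nlinarith [Real.pi_gt_three])
        linarith
      calc (Real.exp (-‖x‖) / (4 * Real.pi * ‖x‖)) ^ q ≤ (‖x‖⁻¹) ^ q :=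
            Real.rpow_le_rpow (by positivity) hb hq0.le
        _ = ‖x‖ ^ (-q) := by rw [← Real.rpow_neg_one, ← Real.rpow_mul (norm_nonneg x)]; ring_nf
  · -- tail part
    have hbd : ∀ x : EuclideanSpace ℝ (Fin 3), x ∈ (ball (0 : EuclideanSpace ℝ (Fin 3)) 1)ᶜ →
        ENNReal.ofReal (Fprof q x) ≤ ENNReal.ofReal (3125 * (1 + ‖x‖) ^ (-(5:ℝ))) := by
      intro x hx
      rw [mem_compl_iff, mem_ball_zero_iff, not_lt] at hx
      refine ENNReal.ofReal_le_ofReal ?_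
      have hxpos : (0:ℝ) < ‖x‖ := lt_of_lt_of_le one_pos hx
      have hden : (1:ℝ) ≤ 4 * Real.pi * ‖x‖ := by nlinarith [Real.pi_gt_three]
      have h1 : Real.exp (-‖x‖) / (4 * Real.pi * ‖x‖) ≤ Real.exp (-‖x‖) :=
        div_le_self (Real.exp_nonneg _) hden
      have h2 : Fprof q x ≤ (Real.exp (-‖x‖)) ^ q :=
        Real.rpow_le_rpow (by positivity) h1 hq0.le
      have h3 : (Real.exp (-‖x‖)) ^ q = Real.exp (-‖x‖ * q) := (Real.exp_mul _ q).symm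
      have h4 : Real.exp (-‖x‖ * q) ≤ Real.exp (-‖x‖) := by
        apply Real.exp_le_exp.2
        nlinarith
      calc Fprof q x ≤ Real.exp (-‖x‖) := by rw [h3] at h2; linarith
        _ ≤ 3125 * (1 + ‖x‖) ^ (-(5:ℝ)) := exp_neg_le _ (norm_nonneg x)
    refine lt_of_le_of_lt (setLIntegral_mono' measurableSet_ball.compl hbd) ?_
    refine lt_of_le_of_lt (setLIntegral_le_lintegral _ _) ?_
    have : ∀ x : EuclideanSpace ℝ (Fin 3), ENNReal.ofReal (3125 * (1 + ‖x‖) ^ (-(5:ℝ)))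
        = ENNReal.ofReal (3125:ℝ) * ENNReal.ofReal ((1 + ‖x‖) ^ (-(5:ℝ))) := fun x => by
      rw [← ENNReal.ofReal_mul (by norm_num)]
    simp_rw [this]
    rw [lintegral_const_mul' _ _ ENNReal.ofReal_ne_top]
    refine ENNReal.mul_lt_top (by simp) ?_
    have h5 : (Module.finrank ℝ (EuclideanSpace ℝ (Fin 3)) : ℝ) < 5 := by
      rw [finrank_E3]; norm_num
    exact finite_integral_one_add_norm h5
-- basic pointwise bound
lemma norm_Kres_le_inv (ν : ℂ) (hν : 0 < ν.im) (x : EuclideanSpace ℝ (Fin 3)) :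
    ‖Kres ν x‖ ≤ ‖x‖⁻¹ := by
  rw [norm_Kres]
  rcases eq_or_ne ‖x‖ 0 with h0 | h0
  · simp [h0]
  · have hx : 0 < ‖x‖ := lt_of_le_of_ne (norm_nonneg x) (Ne.symm h0)
    have h1 : Real.exp (-(ν.im * ‖x‖)) / (4 * Real.pi * ‖x‖) ≤ 1 / (4 * Real.pi * ‖x‖) := by
      gcongr
      exact Real.exp_le_one_iff.2 (by nlinarith [hν])
    have h2 : 1 / (4 * Real.pi * ‖x‖) ≤ ‖x‖⁻¹ := by
      rw [← one_div]
      exact one_div_le_one_div_of_le hx (by nlinarith [Real.pi_gt_three])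
    linarith

lemma coe_nnnorm_rpow (z : ℂ) (q : ℝ) (hq : 0 ≤ q) :
    (‖z‖₊ : ℝ≥0∞) ^ q = ENNReal.ofReal (‖z‖ ^ q) := by
  rw [← enorm_eq_nnnorm, ← ofReal_norm, ← ENNReal.ofReal_rpow_of_nonneg (norm_nonneg _) hq]

theorem stmt9 :
    (∃ C : ℝ, 0 < C ∧ ∀ ν : ℂ, 0 < ν.im →
      eLpNorm (Kres ν) 2 (volume.restrict {x : EuclideanSpace ℝ (Fin 3) | ‖x‖ < 1}) ≤
        ENNReal.ofReal C) ∧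
    (∀ p : ENNReal, 1 ≤ p → p ≠ 3 → ∃ C : ℝ, 0 < C ∧ ∀ ν : ℂ, 0 < ν.im →
      eLpNorm (Kres ν) p (volume.restrict {x : EuclideanSpace ℝ (Fin 3) | 1 ≤ ‖x‖}) ≤
        ENNReal.ofReal (C * (1 + ν.im ^ (1 - 3 / p.toReal)))) := by
  have hSball : {x : EuclideanSpace ℝ (Fin 3) | ‖x‖ < 1} = ball (0 : EuclideanSpace ℝ (Fin 3)) 1 := by
    ext x; simp [mem_ball_zero_iff]
  have hS2meas : MeasurableSet {x : EuclideanSpace ℝ (Fin 3) | 1 ≤ ‖x‖} :=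
    (isClosed_le continuous_const continuous_norm).measurableSet
  constructor
  · -- part (a)
    set B : ℝ≥0∞ := (∫⁻ x in ball (0 : EuclideanSpace ℝ (Fin 3)) 1,
      ENNReal.ofReal (‖x‖ ^ (-(2:ℝ)))) ^ (1/(2:ℝ)) with hB
    have hBfin : B ≠ ∞ :=
      (ENNReal.rpow_lt_top_of_nonneg (by norm_num)
        (lintegral_ball_rpow (by norm_num) (by norm_num)).ne).ne
    refine ⟨B.toReal + 1, by positivity, fun ν hν => ?_⟩
    rw [eLpNorm_eq_lintegral_rpow_enorm_toReal (by norm_num) (by norm_num), hSball]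
    have hpt : ∀ x : EuclideanSpace ℝ (Fin 3),
        (‖Kres ν x‖₊ : ℝ≥0∞) ^ ((2:ℝ≥0∞)).toReal ≤ ENNReal.ofReal (‖x‖ ^ (-(2:ℝ))) := by
      intro x
      rw [ENNReal.toReal_ofNat, coe_nnnorm_rpow _ _ (by norm_num)]
      refine ENNReal.ofReal_le_ofReal ?_
      calc ‖Kres ν x‖ ^ (2:ℝ) ≤ (‖x‖⁻¹) ^ (2:ℝ) :=
            Real.rpow_le_rpow (norm_nonneg _) (norm_Kres_le_inv ν hν x) (by norm_num)
        _ = ‖x‖ ^ (-(2:ℝ)) := by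
            rw [← Real.rpow_neg_one, ← Real.rpow_mul (norm_nonneg x)]; norm_num
    calc (∫⁻ x in ball (0 : EuclideanSpace ℝ (Fin 3)) 1,
            (‖Kres ν x‖₊ : ℝ≥0∞) ^ ((2:ℝ≥0∞)).toReal) ^ (1 / ((2:ℝ≥0∞)).toReal)
        ≤ (∫⁻ x in ball (0 : EuclideanSpace ℝ (Fin 3)) 1,
            ENNReal.ofReal (‖x‖ ^ (-(2:ℝ)))) ^ (1 / ((2:ℝ≥0∞)).toReal) := by
          refine ENNReal.rpow_le_rpow (lintegral_mono fun x => hpt x) (by norm_num)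
      _ = B := by rw [hB]; norm_num
      _ ≤ ENNReal.ofReal (B.toReal + 1) := by
          conv_lhs => rw [← ENNReal.ofReal_toReal hBfin]
          exact ENNReal.ofReal_le_ofReal (by linarith)
  · -- part (b)
    intro p hp1 hp3
    rcases eq_or_ne p ∞ with hptop | hptop
    · -- p = ∞
      refine ⟨(4 * Real.pi)⁻¹, by positivity, fun ν hν => ?_⟩
      subst hptop
      rw [eLpNorm_exponent_top]
      have hbd : ∀ᵐ x ∂(volume.restrict {x : EuclideanSpace ℝ (Fin 3) | 1 ≤ ‖x‖}),
          ‖Kres ν x‖ ≤ (4 * Real.pi)⁻¹ := by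
        refine (ae_restrict_iff' hS2meas).2 (ae_of_all _ fun x hx => ?_)
        simp only [mem_setOf_eq] at hx
        rw [norm_Kres]
        have hxpos : (0:ℝ) < ‖x‖ := lt_of_lt_of_le one_pos hx
        have h1 : Real.exp (-(ν.im * ‖x‖)) ≤ 1 :=
          Real.exp_le_one_iff.2 (by nlinarith)
        rw [div_le_iff₀ (by positivity)]
        calc Real.exp (-(ν.im * ‖x‖)) ≤ 1 := h1
          _ ≤ (4 * Real.pi)⁻¹ * (4 * Real.pi * ‖x‖) := by
              rw [show (4 * Real.pi)⁻¹ * (4 * Real.pi * ‖x‖) = ‖x‖ by field_simp]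
              exact hx
      refine le_trans (eLpNormEssSup_le_of_ae_bound hbd) ?_
      refine ENNReal.ofReal_le_ofReal ?_
      have ht : (0:ℝ) ≤ ν.im ^ (1 - 3 / (∞:ℝ≥0∞).toReal) := Real.rpow_nonneg hν.le _
      have hp4 : (0:ℝ) < (4 * Real.pi)⁻¹ := by positivity
      nlinarith [mul_nonneg hp4.le ht]
    · -- p finite
      have hq1 : 1 ≤ p.toReal := by
        rw [← ENNReal.toReal_one]
        exact ENNReal.toReal_mono hptop hp1
      have hq0 : (0:ℝ) < p.toReal := by linarith
      have hp0 : p ≠ 0 := by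
        intro h; rw [h] at hp1; simp at hp1
      set q := p.toReal with hqdef
      rcases lt_or_gt_of_ne hp3 with hplt | hpgt
      · -- 1 ≤ p < 3 : scaling case
        have hq3 : q < 3 := by
          have := (ENNReal.toReal_lt_toReal hptop (by norm_num : (3:ℝ≥0∞) ≠ ∞)).2 hplt
          simpa using this
        set I : ℝ≥0∞ := ∫⁻ x : EuclideanSpace ℝ (Fin 3), ENNReal.ofReal (Fprof q x) with hI
        have hIfin : I ≠ ∞ := (I_lt_top hq1 hq3).ne
        have hIq : I ^ (1/q) ≠ ∞ :=
          (ENNReal.rpow_lt_top_of_nonneg (by positivity) hIfin).ne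
        refine ⟨(I ^ (1/q)).toReal + 1, by positivity, fun ν hν => ?_⟩
        set t := ν.im with htdef
        rw [eLpNorm_eq_lintegral_rpow_enorm_toReal hp0 hptop]
        have hpt : ∀ x : EuclideanSpace ℝ (Fin 3),
            (‖Kres ν x‖₊ : ℝ≥0∞) ^ q = ENNReal.ofReal (t ^ q * Fprof q (t • x)) := by
          intro x
          rw [coe_nnnorm_rpow _ _ hq0.le]
          congr 1
          rw [norm_Kres]
          unfold Fprof
          rw [norm_smul, Real.norm_eq_abs, abs_of_pos hν]
          rcases eq_or_ne ‖x‖ 0 with h0 | h0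
          · rw [h0]
            simp [Real.zero_rpow hq0.ne']
          · have hx : 0 < ‖x‖ := lt_of_le_of_ne (norm_nonneg x) (Ne.symm h0)
            have hrw : Real.exp (-(t * ‖x‖)) / (4 * Real.pi * (t * ‖x‖))
                = (Real.exp (-(t * ‖x‖)) / (4 * Real.pi * ‖x‖)) * t⁻¹ := by
              field_simp
            have htq : t ^ q ≠ 0 := (Real.rpow_pos_of_pos hν q).ne'
            rw [hrw, Real.mul_rpow (by positivity) (by positivity), Real.inv_rpow hν.le]
            field_simp
            rw [← htdef, mul_comm ‖x‖ t]
        calc (∫⁻ x in {x : EuclideanSpace ℝ (Fin 3) | 1 ≤ ‖x‖},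
                (‖Kres ν x‖₊ : ℝ≥0∞) ^ q) ^ (1/q)
            ≤ (∫⁻ x : EuclideanSpace ℝ (Fin 3), (‖Kres ν x‖₊ : ℝ≥0∞) ^ q) ^ (1/q) :=
              ENNReal.rpow_le_rpow (setLIntegral_le_lintegral _ _) (by positivity)
          _ = (ENNReal.ofReal (t ^ (q - 3)) * I) ^ (1/q) := by
              congr 1
              simp_rw [hpt]
              have : ∀ x : EuclideanSpace ℝ (Fin 3), ENNReal.ofReal (t ^ q * Fprof q (t • x))
                  = ENNReal.ofReal (t ^ q) * ENNReal.ofReal (Fprof q (t • x)) := fun x =>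
                ENNReal.ofReal_mul (by positivity)
              simp_rw [this]
              rw [lintegral_const_mul' _ _ ENNReal.ofReal_ne_top,
                lintegral_scaling hν (fun y => ENNReal.ofReal (Fprof q y)) (Fprof_measurable q),
                ← mul_assoc, ← ENNReal.ofReal_mul (by positivity)]
              congr 2
              rw [Real.rpow_sub hν, show ((3:ℝ)) = ((3:ℕ):ℝ) by norm_num,
                Real.rpow_natCast, div_eq_mul_inv]
          _ = ENNReal.ofReal (t ^ (1 - 3/q)) * I ^ (1/q) := by
              rw [ENNReal.mul_rpow_of_nonneg _ _ (by positivity),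
                ENNReal.ofReal_rpow_of_pos (Real.rpow_pos_of_pos hν _),
                ← Real.rpow_mul hν.le]
              congr 2
              rw [mul_one_div, sub_div, div_self hq0.ne']
          _ ≤ ENNReal.ofReal (t ^ (1 - 3/q)) * ENNReal.ofReal ((I ^ (1/q)).toReal + 1) := by
              gcongr
              conv_lhs => rw [← ENNReal.ofReal_toReal hIq]
              exact ENNReal.ofReal_le_ofReal (by linarith)
          _ ≤ ENNReal.ofReal (((I ^ (1/q)).toReal + 1) * (1 + t ^ (1 - 3/q))) := by
              rw [← ENNReal.ofReal_mul (Real.rpow_nonneg hν.le _)]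
              refine ENNReal.ofReal_le_ofReal ?_
              have h1 : (0:ℝ) ≤ t ^ (1 - 3/q) := Real.rpow_nonneg hν.le _
              have h2 : (0:ℝ) ≤ (I ^ (1/q)).toReal := ENNReal.toReal_nonneg
              nlinarith
      · -- 3 < p < ∞
        have hq3 : 3 < q := by
          have := (ENNReal.toReal_lt_toReal (by norm_num : (3:ℝ≥0∞) ≠ ∞) hptop).2 hpgt
          simpa using this
        set B : ℝ≥0∞ := (ENNReal.ofReal ((2:ℝ) ^ q) *
          ∫⁻ x : EuclideanSpace ℝ (Fin 3), ENNReal.ofReal ((1 + ‖x‖) ^ (-q))) ^ (1/q) with hB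
        have hBfin : B ≠ ∞ := by
          refine (ENNReal.rpow_lt_top_of_nonneg (by positivity) ?_).ne
          refine (ENNReal.mul_lt_top ENNReal.ofReal_lt_top ?_).ne
          refine finite_integral_one_add_norm ?_
          rw [finrank_E3]; exact_mod_cast hq3
        refine ⟨B.toReal + 1, by positivity, fun ν hν => ?_⟩
        rw [eLpNorm_eq_lintegral_rpow_enorm_toReal hp0 hptop]
        have hpt : ∀ x : EuclideanSpace ℝ (Fin 3), 1 ≤ ‖x‖ →
            (‖Kres ν x‖₊ : ℝ≥0∞) ^ q ≤
              ENNReal.ofReal ((2:ℝ) ^ q) * ENNReal.ofReal ((1 + ‖x‖) ^ (-q)) := by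
          intro x hx
          rw [coe_nnnorm_rpow _ _ hq0.le, ← ENNReal.ofReal_mul (by positivity)]
          refine ENNReal.ofReal_le_ofReal ?_
          have hxpos : (0:ℝ) < ‖x‖ := lt_of_lt_of_le one_pos hx
          have hb : ‖Kres ν x‖ ≤ 2 * (1 + ‖x‖)⁻¹ := by
            refine le_trans (norm_Kres_le_inv ν hν x) ?_
            rw [show (2:ℝ) * (1 + ‖x‖)⁻¹ = 2 / (1 + ‖x‖) by rw [div_eq_mul_inv],
              show ‖x‖⁻¹ = 1 / ‖x‖ by rw [one_div], div_le_div_iff₀ hxpos (by positivity)]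
            nlinarith
          calc ‖Kres ν x‖ ^ q ≤ (2 * (1 + ‖x‖)⁻¹) ^ q :=
                Real.rpow_le_rpow (norm_nonneg _) hb hq0.le
            _ = 2 ^ q * (1 + ‖x‖) ^ (-q) := by
                rw [Real.mul_rpow (by norm_num) (by positivity),
                  Real.rpow_neg (by positivity), ← Real.inv_rpow (by positivity)]
        calc (∫⁻ x in {x : EuclideanSpace ℝ (Fin 3) | 1 ≤ ‖x‖},
                (‖Kres ν x‖₊ : ℝ≥0∞) ^ q) ^ (1/q)
            ≤ (∫⁻ x in {x : EuclideanSpace ℝ (Fin 3) | 1 ≤ ‖x‖},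
                ENNReal.ofReal ((2:ℝ) ^ q) * ENNReal.ofReal ((1 + ‖x‖) ^ (-q))) ^ (1/q) :=
              ENNReal.rpow_le_rpow (setLIntegral_mono' hS2meas fun x hx => hpt x hx)
                (by positivity)
          _ ≤ B := by
              rw [hB]
              refine ENNReal.rpow_le_rpow ?_ (by positivity)
              rw [lintegral_const_mul' _ _ ENNReal.ofReal_ne_top]
              exact mul_le_mul_right (setLIntegral_le_lintegral _ _) _
          _ ≤ ENNReal.ofReal ((B.toReal + 1) * (1 + ν.im ^ (1 - 3/q))) := by
              have h1 : (0:ℝ) ≤ ν.im ^ (1 - 3/q) := Real.rpow_nonneg hν.le _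
              conv_lhs => rw [← ENNReal.ofReal_toReal hBfin]
              refine ENNReal.ofReal_le_ofReal ?_
              nlinarith [ENNReal.toReal_nonneg (a := B)]
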